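/- For all positive integers k and s, |stars(k,s)| < (k/ln 2)^s. -/

import Mathlib

/-- `stars(k,s)`: the set of finite sequences `β = (β₁,…,β_t)` with each
`β_j ∈ {★,−}^k \ {−}^k` (modeled as `Fin k → Bool` with at least one `true`)
and the total number of `★`'s over all `β_j` equal to `s`. -/
def starsSet (k s : ℕ) : Set (List (Fin k → Bool)) :=
  {l | (∀ b ∈ l, ∃ i, b i = true) ∧
    (l.map fun b => (Finset.univ.filter fun i => b i = true).card).sum = s}

namespace StarsAux

/-- weight of a block -/
def wt {k : ℕ} (b : Fin k → Bool) : ℕ := (Finset.univ.filter fun i => b i = true).card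

lemma one_le_wt {k : ℕ} {b : Fin k → Bool} (h : ∃ i, b i = true) : 1 ≤ wt b := by
  obtain ⟨i, hi⟩ := h
  have : i ∈ Finset.univ.filter fun i => b i = true := by simp [hi]
  exact Finset.card_pos.mpr ⟨i, this⟩

lemma length_le {k s : ℕ} {l : List (Fin k → Bool)} (hl : l ∈ starsSet k s) :
    l.length ≤ s := by
  obtain ⟨h1, h2⟩ := hl
  calc l.length = (l.map fun b => (1:ℕ)).sum := by simp
    _ ≤ (l.map fun b => wt b).sum := by
        apply List.sum_le_sum
        intro b hb
        exact one_le_wt (h1 _ (by simpa using hb))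
    _ = s := h2

lemma finite_starsSet (k s : ℕ) : (starsSet k s).Finite :=
  (List.finite_length_le (Fin k → Bool) s).subset fun l hl => length_le hl

lemma stars_zero (k : ℕ) : starsSet k 0 = {[]} := by
  ext l
  constructor
  · rintro ⟨h1, h2⟩
    cases l with
    | nil => rfl
    | cons b l =>
      exfalso
      simp only [List.map_cons, List.sum_cons] at h2
      have h3 := one_le_wt (h1 b (by simp))
      unfold wt at h3
      rw [Nat.eq_zero_of_add_eq_zero_right h2] at h3
      simp at h3
  · rintro rfl
    exact ⟨by simp, by simp⟩

lemma sum_pow_wt (k : ℕ) (x : ℝ) :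
    ∑ b : Fin k → Bool, x ^ wt b = (x + 1) ^ k := by
  classical
  have h1 : ((x+1):ℝ)^k = ∑ t ∈ (Finset.univ : Finset (Fin k)).powerset, x ^ t.card := by
    rw [show ((x+1):ℝ)^k = ∏ _i : Fin k, (x + 1) by simp, Finset.prod_add]
    refine Finset.sum_congr rfl fun t _ => ?_
    rw [Finset.prod_const, Finset.prod_const, one_pow, mul_one]
  rw [h1]
  refine Finset.sum_nbij' (i := fun b => Finset.univ.filter fun i => b i = true)
    (j := fun t => fun i => decide (i ∈ t)) ?_ ?_ ?_ ?_ ?_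
  · intro b _; simp
  · intro t _; simp
  · intro b _
    funext i
    by_cases h : b i = true <;> simp [h]
  · intro t _
    ext i; simp
  · intro b _; rfl

/-- index set for the decomposition -/
def B (k s : ℕ) : Finset (Fin k → Bool) :=
  Finset.univ.filter fun b => (∃ i, b i = true) ∧ wt b ≤ s

lemma card_le (k s : ℕ) (hs : 0 < s) :
    (starsSet k s).ncard ≤ ∑ b ∈ B k s, (starsSet k (s - wt b)).ncard := by
  classical
  have hsub : (finite_starsSet k s).toFinset ⊆
      (B k s).biUnion fun b => ((finite_starsSet k (s - wt b)).toFinset).image (b :: ·) := by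
    intro l hl
    rw [Set.Finite.mem_toFinset] at hl
    obtain ⟨h1, h2⟩ := hl
    cases l with
    | nil => simp at h2; omega
    | cons b l =>
      simp only [List.map_cons, List.sum_cons] at h2
      have hb : ∃ i, b i = true := h1 b (by simp)
      have hwt : wt b + (l.map fun b => (Finset.univ.filter fun i => b i = true).card).sum = s := h2
      have hle : wt b ≤ s := le_of_add_le_left hwt.le
      have hmem : l ∈ starsSet k (s - wt b) := by
        refine ⟨fun c hc => h1 c (List.mem_cons_of_mem _ hc), ?_⟩
        exact Nat.eq_sub_of_add_eq ((add_comm _ _).trans hwt)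
      refine Finset.mem_biUnion.mpr ⟨b, ?_, ?_⟩
      · simp only [B, Finset.mem_filter, Finset.mem_univ, true_and]
        exact ⟨hb, hle⟩
      · exact Finset.mem_image.mpr ⟨l, (Set.Finite.mem_toFinset _).mpr hmem, rfl⟩
  calc (starsSet k s).ncard = (finite_starsSet k s).toFinset.card :=
        Set.ncard_eq_toFinset_card _ (finite_starsSet k s)
    _ ≤ _ := Finset.card_le_card hsub
    _ ≤ ∑ b ∈ B k s, ((finite_starsSet k (s - wt b)).toFinset.image (b :: ·)).card :=
        Finset.card_biUnion_le
    _ ≤ ∑ b ∈ B k s, (finite_starsSet k (s - wt b)).toFinset.card :=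
        Finset.sum_le_sum fun b _ => Finset.card_image_le
    _ = ∑ b ∈ B k s, (starsSet k (s - wt b)).ncard := by
        refine Finset.sum_congr rfl fun b _ => ?_
        exact (Set.ncard_eq_toFinset_card _ (finite_starsSet k (s - wt b))).symm

section Main

variable (k : ℕ) (hk : 0 < k)

noncomputable def c (k : ℕ) : ℝ := (k : ℝ) / Real.log 2

lemma c_pos (hk : 0 < k) : 0 < c k := div_pos (by exact_mod_cast hk) (Real.log_pos (by norm_num))

lemma key_lt (hk : 0 < k) : (1 / c k + 1) ^ k < 2 := by
  have hc := c_pos k hk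
  have h1 : 1 / c k + 1 < Real.exp (1 / c k) := Real.add_one_lt_exp (by positivity)
  have h2 : (1 / c k + 1) ^ k < Real.exp (1 / c k) ^ k :=
    pow_lt_pow_left₀ h1 (by positivity) hk.ne'
  refine h2.trans_eq ?_
  rw [← Real.exp_nat_mul]
  have : (k : ℝ) * (1 / c k) = Real.log 2 := by
    unfold c
    have hl2 : Real.log 2 ≠ 0 := (Real.log_pos (by norm_num)).ne'
    have hk0 : (k : ℝ) ≠ 0 := by exact_mod_cast hk.ne'
    field_simp
  rw [this, Real.exp_log] <;> norm_num

lemma sum_B'_lt (hk : 0 < k) : ∑ b ∈ (Finset.univ.filter fun b : Fin k → Bool => ∃ i, b i = true),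
    (1 / c k) ^ wt b < 1 := by
  classical
  have htot := sum_pow_wt k (1 / c k)
  have hsplit := Finset.sum_filter_add_sum_filter_not Finset.univ
    (fun b : Fin k → Bool => ∃ i, b i = true) (fun b => (1 / c k) ^ wt b)
  have hnot : (Finset.univ.filter fun b : Fin k → Bool => ¬∃ i, b i = true)
      = {fun _ => false} := by
    ext b
    simp only [Finset.mem_filter, Finset.mem_univ, true_and, Finset.mem_singleton,
      not_exists]
    constructor
    · intro h; funext i; simpa using h i
    · rintro rfl; simp
  have hwt0 : wt (fun _ : Fin k => false) = 0 := by simp [wt]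
  rw [hnot, Finset.sum_singleton, hwt0, pow_zero, htot] at hsplit
  have := key_lt k hk
  linarith

lemma bound_lt (hk : 0 < k) (s : ℕ) (hs : 0 < s)
    (ih : ∀ m, m < s → ((starsSet k m).ncard : ℝ) ≤ c k ^ m) :
    ((starsSet k s).ncard : ℝ) < c k ^ s := by
  classical
  have hc := c_pos k hk
  have h1 : ((starsSet k s).ncard : ℝ) ≤ ∑ b ∈ B k s, ((starsSet k (s - wt b)).ncard : ℝ) := by
    exact_mod_cast card_le k s hs
  have h2 : ∑ b ∈ B k s, ((starsSet k (s - wt b)).ncard : ℝ)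
      ≤ ∑ b ∈ B k s, c k ^ s * (1 / c k) ^ wt b := by
    refine Finset.sum_le_sum fun b hb => ?_
    simp only [B, Finset.mem_filter, Finset.mem_univ, true_and] at hb
    obtain ⟨hbe, hble⟩ := hb
    have hlt : s - wt b < s := Nat.sub_lt hs (one_le_wt hbe)
    refine (ih _ hlt).trans_eq ?_
    rw [pow_sub₀ _ hc.ne' hble, one_div, inv_pow]
  have hsub : B k s ⊆ Finset.univ.filter fun b : Fin k → Bool => ∃ i, b i = true := by
    intro b hb
    simp only [B, Finset.mem_filter, Finset.mem_univ, true_and] at hb ⊢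
    exact hb.1
  have h3 : ∑ b ∈ B k s, c k ^ s * (1 / c k) ^ wt b
      ≤ ∑ b ∈ (Finset.univ.filter fun b : Fin k → Bool => ∃ i, b i = true),
          c k ^ s * (1 / c k) ^ wt b := by
    refine Finset.sum_le_sum_of_subset_of_nonneg hsub fun b _ _ => ?_
    positivity
  have h4 : ∑ b ∈ (Finset.univ.filter fun b : Fin k → Bool => ∃ i, b i = true),
      c k ^ s * (1 / c k) ^ wt b < c k ^ s := by
    rw [← Finset.mul_sum]
    calc c k ^ s * ∑ b ∈ (Finset.univ.filter fun b : Fin k → Bool => ∃ i, b i = true),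
          (1 / c k) ^ wt b < c k ^ s * 1 :=
        mul_lt_mul_of_pos_left (sum_B'_lt k hk) (pow_pos hc s)
      _ = c k ^ s := mul_one _
  linarith

lemma bound_le (hk : 0 < k) : ∀ s : ℕ, ((starsSet k s).ncard : ℝ) ≤ c k ^ s := by
  intro s
  induction s using Nat.strong_induction_on with
  | _ s ih =>
    rcases Nat.eq_zero_or_pos s with rfl | hs
    · rw [stars_zero, Set.ncard_singleton]; simp
    · exact (bound_lt k hk s hs ih).le

end Main

end StarsAux

/-- for all positive integers `k` and `s`,
`|stars(k,s)| < (k / ln 2)^s`. -/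
theorem stars_card_bound (k s : ℕ) (hk : 0 < k) (hs : 0 < s) :
    ((starsSet k s).ncard : ℝ) < ((k : ℝ) / Real.log 2) ^ s := by
  have := StarsAux.bound_lt k hk s hs fun m _ => StarsAux.bound_le k hk m
  simpa [StarsAux.c] using this
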